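/- Let x, y, x', y', u, v : List α, let C : ℕ, and let I ⊆ ℕ be an infinite set. If levenshtein (x ++ u^k ++ y) (x' ++ v^k ++ y') ≤ C for every k ∈ I, then u and v are conjugate. -/

import Mathlib

/-- `wpow u k` is the k-fold concatenation `u ++ u ++ ⋯ ++ u` (k copies). -/
def wpow {α : Type*} (u : List α) (k : ℕ) : List α := (List.replicate k u).flatten

/-- Cost structure for the Levenshtein distance (removed from Mathlib; restored verbatim in meaning). -/
structure Levenshtein.Cost (α β δ : Type*) where
  delete : α → δ
  insert : β → δ
  substitute : α → β → δ

/-- The default cost structure: each insertion, deletion and substitution costs 1. -/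
def Levenshtein.defaultCost {α : Type*} [DecidableEq α] : Levenshtein.Cost α α ℕ where
  delete _ := 1
  insert _ := 1
  substitute a b := if a = b then 0 else 1

/-- One step of the dynamic program for the Levenshtein distance. -/
def Levenshtein.impl {α β δ : Type*} [AddZeroClass δ] [Min δ] (C : Levenshtein.Cost α β δ)
    (xs : List α) (y : β) (d : {r : List δ // 0 < r.length}) : {r : List δ // 0 < r.length} :=
  let ⟨ds, w⟩ := d
  xs.zip (ds.zip ds.tail) |>.foldr
    (init := ⟨[C.insert y + ds.getLast (List.length_pos_iff.mp w)], by simp⟩)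
    (fun ⟨x, d₀, d₁⟩ ⟨r, w⟩ =>
      ⟨min (C.delete x + r[0]) (min (C.insert y + d₀) (C.substitute x y + d₁)) :: r, by simp⟩)

/-- Levenshtein distances of all suffixes of `xs` to `ys`. -/
def suffixLevenshtein {α β δ : Type*} [AddZeroClass δ] [Min δ] (C : Levenshtein.Cost α β δ)
    (xs : List α) (ys : List β) : {r : List δ // 0 < r.length} :=
  ys.foldr
    (Levenshtein.impl C xs)
    (xs.foldr (init := ⟨[0], by simp⟩) (fun a ⟨r, w⟩ => ⟨(C.delete a + r[0]) :: r, by simp⟩))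

/-- The Levenshtein edit distance (as in the removed Mathlib `levenshtein`). -/
def levenshtein {α β δ : Type*} [AddZeroClass δ] [Min δ] (C : Levenshtein.Cost α β δ)
    (xs : List α) (ys : List β) : δ :=
  let ⟨r, _⟩ := suffixLevenshtein C xs ys
  r[0]

namespace Stmt1Lev

variable {α β δ : Type*} [AddZeroClass δ] [Min δ] (C : Levenshtein.Cost α β δ)

theorem impl_length (xs : List α) (y : β) (d : {r : List δ // 0 < r.length})
    (w : d.1.length = xs.length + 1) :
    (Levenshtein.impl C xs y d).1.length = xs.length + 1 := by
  induction xs generalizing d with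
  | nil => rfl
  | cons x xs ih =>
    dsimp [Levenshtein.impl]
    match d, w with
    | ⟨d₁ :: d₂ :: ds, _⟩, w =>
      dsimp
      congr 1
      exact ih ⟨d₂ :: ds, (by simp)⟩ (by simpa using w)

theorem suffixLevenshtein_length (xs : List α) (ys : List β) :
    (suffixLevenshtein C xs ys).1.length = xs.length + 1 := by
  induction ys with
  | nil =>
    dsimp [suffixLevenshtein]
    induction xs with
    | nil => rfl
    | cons _ xs ih =>
      simp_all
  | cons y ys ih =>
    dsimp [suffixLevenshtein]
    rw [impl_length]
    exact ih

theorem suffixLevenshtein_cons₂ (xs : List α) (y : β) (ys : List β) :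
    suffixLevenshtein C xs (y :: ys) = (Levenshtein.impl C xs) y (suffixLevenshtein C xs ys) :=
  rfl

theorem impl_cons (x : α) (xs : List α) (y : β) (d : δ) (ds : List δ) (w)
    (w' : 0 < List.length ds) :
    Levenshtein.impl C (x :: xs) y ⟨d :: ds, w⟩ =
      let ⟨r, w⟩ := Levenshtein.impl C xs y ⟨ds, w'⟩
      ⟨min (C.delete x + r[0]) (min (C.insert y + d) (C.substitute x y + ds[0])) :: r,
        by simp⟩ :=
  match ds, w' with | _ :: _, _ => rfl

theorem impl_cons_fst_zero (x : α) (xs : List α) (y : β) (d : δ) (ds : List δ) (w) (h)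
    (w' : 0 < List.length ds) (hh) :
    (Levenshtein.impl C (x :: xs) y ⟨d :: ds, w⟩).1[0]'h =
      min (C.delete x + (Levenshtein.impl C xs y ⟨ds, w'⟩).1[0]'hh)
        (min (C.insert y + d) (C.substitute x y + ds[0])) :=
  match ds, w' with | _ :: _, _ => rfl

theorem suffixLevenshtein_cons₁_aux {x y : {r : List δ // 0 < r.length}}
    (w₀ : x.1[0]'x.2 = y.1[0]'y.2) (w : x.1.tail = y.1.tail) : x = y := by
  match x, y with
  | ⟨hx :: tx, _⟩, ⟨hy :: ty, _⟩ => simp_all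

theorem suffixLevenshtein_cons₁ (x : α) (xs : List α) (ys : List β) :
    suffixLevenshtein C (x :: xs) ys =
      ⟨levenshtein C (x :: xs) ys :: (suffixLevenshtein C xs ys).1, by simp⟩ := by
  induction ys with
  | nil => rfl
  | cons y ys ih =>
    apply suffixLevenshtein_cons₁_aux
    · rfl
    · rw [suffixLevenshtein_cons₂ C (x :: xs), ih, impl_cons]
      · rfl
      · simp [suffixLevenshtein_length]

theorem levenshtein_nil_cons (y : β) (ys : List β) :
    levenshtein C [] (y :: ys) = C.insert y + levenshtein C [] ys := by
  have hl := suffixLevenshtein_length C ([] : List α) ys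
  unfold levenshtein
  rw [suffixLevenshtein_cons₂]
  generalize suffixLevenshtein C [] ys = d at hl ⊢
  match d, hl with
  | ⟨[d], _⟩, _ => rfl

@[simp] theorem levenshtein_nil_nil : levenshtein C ([] : List α) ([] : List β) = 0 := rfl

theorem levenshtein_cons_nil (x : α) (xs : List α) :
    levenshtein C (x :: xs) ([] : List β) = C.delete x + levenshtein C xs ([] : List β) :=
  rfl

theorem levenshtein_cons_cons (x : α) (xs : List α) (y : β) (ys : List β) :
    levenshtein C (x :: xs) (y :: ys) =
      min (C.delete x + levenshtein C xs (y :: ys))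
        (min (C.insert y + levenshtein C (x :: xs) ys)
          (C.substitute x y + levenshtein C xs ys)) := by
  have h1 : levenshtein C (x :: xs) (y :: ys) =
      (Levenshtein.impl C (x :: xs) y (suffixLevenshtein C (x :: xs) ys)).1[0]'(by
        rw [impl_length]; · simp
        · exact suffixLevenshtein_length C _ _) := rfl
  rw [h1]
  simp only [suffixLevenshtein_cons₁]
  rw [impl_cons_fst_zero (w' := by simp [suffixLevenshtein_length])]
  rfl

end Stmt1Lev

@[simp] lemma Levenshtein.defaultCost_insert {α : Type*} [DecidableEq α] (a : α) :
    (Levenshtein.defaultCost : Levenshtein.Cost α α ℕ).insert a = 1 := rfl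

@[simp] lemma Levenshtein.defaultCost_delete {α : Type*} [DecidableEq α] (a : α) :
    (Levenshtein.defaultCost : Levenshtein.Cost α α ℕ).delete a = 1 := rfl

@[simp] lemma Levenshtein.defaultCost_substitute {α : Type*} [DecidableEq α] (a b : α) :
    (Levenshtein.defaultCost : Levenshtein.Cost α α ℕ).substitute a b = if a = b then 0 else 1 :=
  rfl

namespace Stmt1Aux

set_option linter.unusedSectionVars false

variable {α : Type*} [DecidableEq α]

/-- Alignments between two lists with a given edit cost. -/
inductive Al : List α → List α → ℕ → Prop
  | nil : Al [] [] 0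
  | mtch (a : α) {s t : List α} {c : ℕ} : Al s t c → Al (a :: s) (a :: t) c
  | sub (a b : α) {s t : List α} {c : ℕ} : Al s t c → Al (a :: s) (b :: t) (c + 1)
  | del (a : α) {s t : List α} {c : ℕ} : Al s t c → Al (a :: s) t (c + 1)
  | ins (b : α) {s t : List α} {c : ℕ} : Al s t c → Al s (b :: t) (c + 1)

lemma al_lev : ∀ a b : List α, Al a b (levenshtein Levenshtein.defaultCost a b) := by
  intro a
  induction a with
  | nil =>
    intro b
    induction b with
    | nil => simpa using Al.nil
    | cons y ys ih =>
      rw [Stmt1Lev.levenshtein_nil_cons]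
      simp only [Levenshtein.defaultCost_insert]
      rw [Nat.add_comm]
      exact Al.ins y ih
  | cons x xs ihx =>
    intro b
    induction b with
    | nil =>
      rw [Stmt1Lev.levenshtein_cons_nil]
      simp only [Levenshtein.defaultCost_delete]
      rw [Nat.add_comm]
      exact Al.del x (ihx [])
    | cons y ys ihy =>
      rw [Stmt1Lev.levenshtein_cons_cons]
      have h1 : Al (x :: xs) (y :: ys)
          (Levenshtein.defaultCost.delete x + levenshtein Levenshtein.defaultCost xs (y :: ys)) := by
        simp only [Levenshtein.defaultCost_delete]
        rw [Nat.add_comm]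
        exact Al.del x (ihx (y :: ys))
      have h2 : Al (x :: xs) (y :: ys)
          (Levenshtein.defaultCost.insert y + levenshtein Levenshtein.defaultCost (x :: xs) ys) := by
        simp only [Levenshtein.defaultCost_insert]
        rw [Nat.add_comm]
        exact Al.ins y ihy
      have h3 : Al (x :: xs) (y :: ys)
          (Levenshtein.defaultCost.substitute x y + levenshtein Levenshtein.defaultCost xs ys) := by
        by_cases hxy : x = y
        · subst hxy
          simp only [Levenshtein.defaultCost_substitute, if_pos rfl, eq_self_iff_true, if_true,
            Nat.zero_add]
          exact Al.mtch x (ihx ys)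
        · simp only [Levenshtein.defaultCost_substitute, if_neg hxy]
          rw [Nat.add_comm]
          exact Al.sub x y (ihx ys)
      rcases min_choice
        (Levenshtein.defaultCost.delete x + levenshtein Levenshtein.defaultCost xs (y :: ys))
        (min (Levenshtein.defaultCost.insert y + levenshtein Levenshtein.defaultCost (x :: xs) ys)
          (Levenshtein.defaultCost.substitute x y + levenshtein Levenshtein.defaultCost xs ys))
        with hm | hm
      · rw [hm]; exact h1
      · rw [hm]
        rcases min_choice
          (Levenshtein.defaultCost.insert y + levenshtein Levenshtein.defaultCost (x :: xs) ys)
          (Levenshtein.defaultCost.substitute x y + levenshtein Levenshtein.defaultCost xs ys)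
          with hm' | hm'
        · rw [hm']; exact h2
        · rw [hm']; exact h3

lemma Al.len {a b : List α} {c : ℕ} (h : Al a b c) :
    a.length ≤ b.length + c ∧ b.length ≤ a.length + c := by
  induction h with
  | nil => simp
  | mtch a h ih => simp only [List.length_cons]; omega
  | sub a b h ih => simp only [List.length_cons]; omega
  | del a h ih => simp only [List.length_cons]; omega
  | ins b h ih => simp only [List.length_cons]; omega

lemma firstBlock {a b : List α} {c : ℕ} (h : Al a b c) :
    ∃ m a₂ b₂ : List α, a = m ++ a₂ ∧ b = m ++ b₂ ∧
      ((a₂ = [] ∧ b₂ = []) ∨ ∃ a₃ b₃ c₃, c₃ + 1 ≤ c ∧ Al a₃ b₃ c₃ ∧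
        a₃ <:+ a₂ ∧ b₃ <:+ b₂ ∧ a₂.length ≤ a₃.length + 1 ∧ b₂.length ≤ b₃.length + 1) := by
  induction h with
  | nil => exact ⟨[], [], [], rfl, rfl, Or.inl ⟨rfl, rfl⟩⟩
  | mtch x h ih =>
    obtain ⟨m, a₂, b₂, ha, hb, hr⟩ := ih
    exact ⟨x :: m, a₂, b₂, by simp [ha], by simp [hb], hr⟩
  | sub x y h ih =>
    exact ⟨[], _, _, rfl, rfl, Or.inr ⟨_, _, _, le_refl _, h,
      List.suffix_cons x _, List.suffix_cons y _, by simp, by simp⟩⟩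
  | del x h ih =>
    exact ⟨[], _, _, rfl, rfl, Or.inr ⟨_, _, _, le_refl _, h,
      List.suffix_cons x _, List.suffix_refl _, by simp, by simp⟩⟩
  | ins y h ih =>
    exact ⟨[], _, _, rfl, rfl, Or.inr ⟨_, _, _, le_refl _, h,
      List.suffix_refl _, List.suffix_cons y _, by simp, by simp⟩⟩

lemma blocks : ∀ c : ℕ, ∀ {a b : List α}, Al a b c →
    ∃ m : List α, m <:+: a ∧ m <:+: b ∧ a.length ≤ (c + 1) * m.length + c := by
  intro c
  induction c using Nat.strong_induction_on with
  | _ c ih =>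
    intro a b h
    obtain ⟨m, a₂, b₂, ha, hb, hr | ⟨a₃, b₃, c₃, hc, h₃, sa, sb, la, lb⟩⟩ := firstBlock h
    · obtain ⟨rfl, rfl⟩ := hr
      simp only [List.append_nil] at ha hb
      refine ⟨m, by rw [ha], by rw [hb], ?_⟩
      have h1 : a.length = m.length := by rw [ha]
      nlinarith [Nat.zero_le (c * m.length)]
    · obtain ⟨m₃, i3a, i3b, h3len⟩ := ih c₃ (by omega) h₃
      have ia3 : a₃ <:+: a := by
        rw [ha]; exact sa.isInfix.trans (List.suffix_append m a₂).isInfix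
      have ib3 : b₃ <:+: b := by
        rw [hb]; exact sb.isInfix.trans (List.suffix_append m b₂).isInfix
      have hma : m <:+: a := by rw [ha]; exact (List.prefix_append m a₂).isInfix
      have hmb : m <:+: b := by rw [hb]; exact (List.prefix_append m b₂).isInfix
      have hlena : a.length = m.length + a₂.length := by rw [ha]; simp
      by_cases hcmp : m.length ≤ m₃.length
      · refine ⟨m₃, i3a.trans ia3, i3b.trans ib3, ?_⟩
        have hmul : (c₃ + 1) * m₃.length ≤ c * m₃.length := Nat.mul_le_mul_right _ hc
        nlinarith [h3len, la, hlena, hcmp, hmul, hc]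
      · refine ⟨m, hma, hmb, ?_⟩
        have h2 : m₃.length ≤ m.length := by omega
        have hmul2 : (c₃ + 1) * m₃.length ≤ (c₃ + 1) * m.length := Nat.mul_le_mul_left _ h2
        have hmul3 : (c₃ + 2) * m.length ≤ (c + 1) * m.length :=
          Nat.mul_le_mul_right _ (by omega)
        nlinarith [h3len, la, hlena, hmul2, hmul3, hc]

lemma drop_take_mid (p m s : List α) (D L : ℕ) (hDL : D + L ≤ m.length) :
    ((p ++ m ++ s).drop (p.length + D)).take L = (m.drop D).take L := by
  rw [List.append_assoc, List.drop_length_add_append, List.drop_append_of_le_length (by omega),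
    List.take_append_of_le_length (by rw [List.length_drop]; omega)]

lemma middle_infix {p m s X W Y : List α} {D L : ℕ}
    (h : p ++ m ++ s = X ++ W ++ Y)
    (hD : X.length ≤ p.length + D) (hDL : D + L ≤ m.length)
    (hL : p.length + D + L ≤ X.length + W.length) :
    (m.drop D).take L <:+: W := by
  have e1 := drop_take_mid p m s D L hDL
  have e2 : p.length + D = X.length + (p.length + D - X.length) := by omega
  have e3 := drop_take_mid X W Y (p.length + D - X.length) L (by omega)
  rw [h, e2, e3] at e1
  rw [← e1]
  exact (List.take_prefix _ _).isInfix.trans (List.drop_suffix _ _).isInfix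

lemma wpow_succ (u : List α) (k : ℕ) : wpow u (k + 1) = u ++ wpow u k := by
  simp [wpow, List.replicate_succ]

lemma wpow_length (u : List α) (k : ℕ) : (wpow u k).length = k * u.length := by
  simp [wpow]

lemma wpow_drop (u : List α) (q : ℕ) : ∀ j, (wpow u (q + j)).drop (q * u.length) = wpow u j := by
  induction q with
  | zero => intro j; simp
  | succ q ihq =>
    intro j
    have h1 : q + 1 + j = (q + j) + 1 := by omega
    rw [h1, wpow_succ, Nat.succ_mul, Nat.add_comm (q * u.length) u.length, List.drop_length_add_append]
    exact ihq j

lemma rot_of_infix {u m : List α} {k : ℕ} (hu : u ≠ []) (hm : m <:+: wpow u k)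
    (hl : m.length = u.length) : u.IsRotated m := by
  have hn : 0 < u.length := List.length_pos_iff.2 hu
  obtain ⟨s, t, hst⟩ := hm
  have hme : m = ((wpow u k).drop s.length).take u.length := by
    rw [← hst, List.append_assoc, List.drop_left,
      List.take_append_of_le_length (le_of_eq hl.symm), ← hl, List.take_length]
  have hlen : s.length + m.length + t.length = k * u.length := by
    have h1 := congrArg List.length hst
    simp only [List.length_append, wpow_length] at h1
    omega
  set q := s.length / u.length with hq
  set r := s.length % u.length with hr
  have hqr : q * u.length + r = s.length := by
    rw [hq, hr, Nat.mul_comm]; exact Nat.div_add_mod s.length u.length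
  have hrn : r < u.length := Nat.mod_lt _ hn
  have hkq : q + 1 ≤ k := by
    by_contra hcon
    have h1 : k ≤ q := by omega
    have h2 : k * u.length ≤ q * u.length := Nat.mul_le_mul_right _ h1
    omega
  have hdrop : (wpow u k).drop s.length = (wpow u (k - q)).drop r := by
    have e0 : s.length = q * u.length + r := hqr.symm
    have e1 : k = q + (k - q) := by omega
    have e2 := wpow_drop u q (k - q)
    rw [← e1] at e2
    rw [e0, ← List.drop_drop, e2]
  rcases Nat.eq_zero_or_pos r with hr0 | hr0
  · obtain ⟨j, hj⟩ : ∃ j, k - q = j + 1 := ⟨k - q - 1, by omega⟩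
    have hmu : m = u := by
      rw [hme, hdrop, hr0, List.drop_zero, hj, wpow_succ, List.take_left]
    rw [hmu]
  · obtain ⟨j, hj⟩ : ∃ j, k - q = j + 2 := by
      refine ⟨k - q - 2, ?_⟩
      by_contra hcon
      have hkq1 : k = q + 1 := by omega
      have h1 : k * u.length = q * u.length + u.length := by rw [hkq1]; ring
      omega
    have hme2 : m = u.drop r ++ u.take r := by
      rw [hme, hdrop, hj, wpow_succ, wpow_succ,
        List.drop_append_of_le_length (le_of_lt hrn),
        List.take_append,
        List.take_of_length_le (by simp),
        List.length_drop,
        show u.length - (u.length - r) = r by omega,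
        List.take_append_of_le_length (le_of_lt hrn)]
    refine ⟨r, ?_⟩
    rw [List.rotate_eq_drop_append_take (le_of_lt hrn), hme2]

end Stmt1Aux

theorem stmt_1 {α : Type*} [DecidableEq α] (x y x' y' u v : List α) (C : ℕ) (I : Set ℕ)
    (hI : I.Infinite)
    (h : ∀ k ∈ I,
      levenshtein Levenshtein.defaultCost (x ++ wpow u k ++ y) (x' ++ wpow v k ++ y') ≤ C) :
    List.IsRotated u v := by
  classical
  -- Step 1: u and v have the same length.
  have key : u.length = v.length := by
    by_contra hne
    obtain ⟨k, hkI, hk⟩ := hI.exists_gt (C + x.length + y.length + x'.length + y'.length)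
    have hlev := h k hkI
    have hal := Stmt1Aux.al_lev (x ++ wpow u k ++ y) (x' ++ wpow v k ++ y')
    obtain ⟨hl1, hl2⟩ := hal.len
    simp only [List.length_append, Stmt1Aux.wpow_length] at hl1 hl2
    rcases Nat.lt_or_ge u.length v.length with h1 | h1
    · have h2 : k * (u.length + 1) ≤ k * v.length := Nat.mul_le_mul_left k h1
      rw [Nat.mul_add, Nat.mul_one] at h2
      omega
    · have h1' : v.length + 1 ≤ u.length := by omega
      have h2 : k * (v.length + 1) ≤ k * u.length := Nat.mul_le_mul_left k h1'
      rw [Nat.mul_add, Nat.mul_one] at h2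
      omega
  by_cases hu0 : u = []
  · have hv0 : v = [] := by
      have h0 : v.length = 0 := by rw [← key, hu0]; simp
      exact List.length_eq_zero_iff.mp h0
    rw [hu0, hv0]
  · have hn : 0 < u.length := List.length_pos_iff.2 hu0
    obtain ⟨k, hkI, hk⟩ := hI.exists_gt
      ((C + 1) * (x.length + x'.length + u.length + y.length + y'.length) + C)
    have hlev := h k hkI
    have hal := Stmt1Aux.al_lev (x ++ wpow u k ++ y) (x' ++ wpow v k ++ y')
    obtain ⟨m, infa, infb, hml⟩ := Stmt1Aux.blocks _ hal
    have halen : (x ++ wpow u k ++ y).length = x.length + k * u.length + y.length := by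
      simp only [List.length_append, Stmt1Aux.wpow_length]
    have hkn : k ≤ k * u.length := Nat.le_mul_of_pos_right k hn
    have hmlC : (x ++ wpow u k ++ y).length ≤ (C + 1) * m.length + C := by
      have h1 : (levenshtein Levenshtein.defaultCost (x ++ wpow u k ++ y)
          (x' ++ wpow v k ++ y') + 1) * m.length ≤ (C + 1) * m.length :=
        Nat.mul_le_mul_right _ (by omega)
      omega
    have hmbig : x.length + x'.length + u.length + y.length + y'.length ≤ m.length := by
      by_contra hcon
      have h1 : m.length + 1 ≤ x.length + x'.length + u.length + y.length + y'.length := by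
        omega
      have h2 : (C + 1) * (m.length + 1) ≤
          (C + 1) * (x.length + x'.length + u.length + y.length + y'.length) :=
        Nat.mul_le_mul_left _ h1
      have h3 : (C + 1) * (m.length + 1) = (C + 1) * m.length + (C + 1) := by ring
      omega
    obtain ⟨pa, sa, hpa⟩ := infa
    obtain ⟨pb, sb, hpb⟩ := infb
    have hlpa := congrArg List.length hpa
    have hlpb := congrArg List.length hpb
    simp only [List.length_append, Stmt1Aux.wpow_length] at hlpa hlpb
    rw [← key] at hlpb
    have hm'u : (m.drop (x.length + x'.length)).take u.length <:+: wpow u k := by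
      refine Stmt1Aux.middle_infix hpa (by omega) (by omega) ?_
      simp only [Stmt1Aux.wpow_length]
      omega
    have hm'v : (m.drop (x.length + x'.length)).take u.length <:+: wpow v k := by
      refine Stmt1Aux.middle_infix hpb (by omega) (by omega) ?_
      simp only [Stmt1Aux.wpow_length]
      rw [← key]
      omega
    have hm'len : ((m.drop (x.length + x'.length)).take u.length).length = u.length := by
      rw [List.length_take, List.length_drop]
      omega
    have hru := Stmt1Aux.rot_of_infix hu0 hm'u hm'len
    have hrv : v.IsRotated ((m.drop (x.length + x'.length)).take u.length) := by
      refine Stmt1Aux.rot_of_infix ?_ hm'v (by rw [hm'len, key])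
      intro hv0
      rw [hv0] at key
      simp only [List.length_nil] at key
      omega
    exact hru.trans hrv.symm
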